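/- Let k ≥ 3 and 2 ≤ D ≤ k be integers, let Ω be the soliton distribution with maximum degree D, and let d̄ = Σ_{d=1}^D 1/d be its query difficulty. Let s be an integer with 1 ≤ s ≤ k/2 such that ⌈κ(s)⌉ > D, and let n be an integer with n·d̄ ≥ 5·k·log k. Then C(k,s)·e^{−nΣ_s} < k^{−s}. -/
import Mathlib


open Finset Real

/-- The soliton distribution with maximum degree `D`:
`Ω_1 = 1/D`, `Ω_d = 1/(d(d−1))` for `2 ≤ d ≤ D`, and `Ω_d = 0` otherwise. -/
noncomputable def soliton (D d : ℕ) : ℝ :=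
  if d = 1 then 1 / (D : ℝ)
  else if 2 ≤ d ∧ d ≤ D then 1 / ((d : ℝ) * ((d : ℝ) - 1))
  else 0

/-- `⌈κ(s)⌉` where `κ(s) = (k−s+1)/(2s+1)`. -/
noncomputable def kappaCeil (k s : ℕ) : ℕ := ⌈(((k : ℝ) - s + 1) / (2 * s + 1))⌉₊

/-- `Σ_s = (1/5)·Σ_{d=⌈κ(s)⌉}^{k−⌈κ(s)⌉} Ω_d
      + (2s/5)·( Σ_{d=1}^{⌈κ(s)⌉−1} d·Ω_d/(k−d+1)
               + Σ_{d=k−⌈κ(s)⌉+1}^{k} (k−d)·Ω_d/(d+1) )`. -/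
noncomputable def SigmaS (k : ℕ) (Ω : ℕ → ℝ) (s : ℕ) : ℝ :=
  (1 / 5) * (∑ d ∈ Finset.Icc (kappaCeil k s) (k - kappaCeil k s), Ω d) +
    (2 * s / 5) *
      ((∑ d ∈ Finset.Icc 1 (kappaCeil k s - 1), (d : ℝ) * Ω d / ((k : ℝ) - d + 1)) +
        ∑ d ∈ Finset.Icc (k - kappaCeil k s + 1) k, ((k : ℝ) - d) * Ω d / ((d : ℝ) + 1))

lemma soliton_nonneg (D d : ℕ) : 0 ≤ soliton D d := by
  unfold soliton
  split_ifs with h1 h2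
  · positivity
  · have h2' : (2:ℝ) ≤ d := by exact_mod_cast h2.1
    apply div_nonneg (by norm_num)
    nlinarith
  · exact le_refl _

lemma sumrecip (D : ℕ) : ∑ d ∈ Icc 2 (D+1), (1:ℝ)/((d:ℝ)-1) = ∑ d ∈ Icc 1 D, 1/(d:ℝ) := by
  induction D with
  | zero => simp
  | succ E ih =>
    rw [show E + 1 + 1 = (E + 1) + 1 from rfl,
      Finset.sum_Icc_succ_top (by omega : 2 ≤ E + 1 + 1),
      Finset.sum_Icc_succ_top (by omega : 1 ≤ E + 1), ih]
    push_cast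
    ring

lemma dbar_eq (E : ℕ) (hE : 1 ≤ E) :
    ∑ d ∈ Icc 1 (E+1), (d:ℝ) * soliton (E+1) d = ∑ d ∈ Icc 1 (E+1), 1/(d:ℝ) := by
  have h2 : ∑ d ∈ Icc 2 (E+1), (d:ℝ) * soliton (E+1) d
      = ∑ d ∈ Icc 2 (E+1), (1:ℝ)/((d:ℝ)-1) := by
    apply Finset.sum_congr rfl
    intro d hd
    simp only [Finset.mem_Icc] at hd
    have h1 : d ≠ 1 := by omega
    have hsol : soliton (E+1) d = 1 / ((d:ℝ) * ((d:ℝ)-1)) := by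
      unfold soliton; rw [if_neg h1, if_pos ⟨hd.1, hd.2⟩]
    rw [hsol]
    have hd2 : (2:ℝ) ≤ d := by exact_mod_cast hd.1
    rw [mul_one_div, div_eq_div_iff (by nlinarith : ((d:ℝ) * ((d:ℝ)-1)) ≠ 0) (by nlinarith : ((d:ℝ)-1) ≠ 0)]
    ring
  have hins : Icc 1 (E+1) = insert 1 (Icc 2 (E+1)) := by
    ext x; simp only [Finset.mem_Icc, Finset.mem_insert]; omega
  calc ∑ d ∈ Icc 1 (E+1), (d:ℝ) * soliton (E+1) d
      = (1:ℝ) * soliton (E+1) 1 + ∑ d ∈ Icc 2 (E+1), (1:ℝ)/((d:ℝ)-1) := by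
        rw [hins, Finset.sum_insert (by simp), h2]; norm_num
    _ = 1/((E:ℝ)+1) + ∑ d ∈ Icc 1 E, 1/(d:ℝ) := by
        rw [sumrecip]
        congr 1
        unfold soliton
        rw [if_pos rfl]
        push_cast
        ring
    _ = ∑ d ∈ Icc 1 (E+1), 1/(d:ℝ) := by
        rw [Finset.sum_Icc_succ_top (by omega : 1 ≤ E + 1)]
        push_cast
        ring

theorem stmt3 (k D : ℕ) (hk : 3 ≤ k) (hD2 : 2 ≤ D) (hDk : D ≤ k)
    (dbar : ℝ) (hdbar : dbar = ∑ d ∈ Finset.Icc 1 D, (1 : ℝ) / d)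
    (s : ℕ) (hs1 : 1 ≤ s) (hs2 : 2 * s ≤ k) (hκ : D < kappaCeil k s)
    (n : ℕ) (hn : 5 * (k : ℝ) * Real.log k ≤ (n : ℝ) * dbar) :
    (k.choose s : ℝ) * Real.exp (-(n : ℝ) * SigmaS k (soliton D) s) < ((k : ℝ) ^ s)⁻¹ := by
  have hk1 : (1:ℝ) < k := by exact_mod_cast (by omega : 1 < k)
  have hk0 : (0:ℝ) < k := by linarith
  have hkr : (3:ℝ) ≤ k := by exact_mod_cast hk
  have hs1' : (1:ℝ) ≤ s := by exact_mod_cast hs1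
  have hDk' : (D:ℝ) ≤ k := by exact_mod_cast hDk
  have hlogk : 0 < Real.log k := Real.log_pos hk1
  have hDx : (D:ℝ) * (2*s + 1) < (k:ℝ) - s + 1 := by
    have h := hκ
    rw [kappaCeil, Nat.lt_ceil] at h
    rwa [lt_div_iff₀ (by positivity)] at h
  have hκle : kappaCeil k s ≤ k - D := by
    rw [kappaCeil, Nat.ceil_le]
    rw [Nat.cast_sub hDk, div_le_iff₀ (by positivity)]
    nlinarith
  -- the first sum vanishes
  have hsum1 : ∑ d ∈ Icc (kappaCeil k s) (k - kappaCeil k s), soliton D d = 0 := by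
    apply Finset.sum_eq_zero
    intro d hd
    simp only [Finset.mem_Icc] at hd
    have hdD : D < d := lt_of_lt_of_le hκ hd.1
    unfold soliton
    rw [if_neg (by omega), if_neg (by omega)]
  -- the third sum vanishes
  have hsum3 : ∑ d ∈ Icc (k - kappaCeil k s + 1) k, ((k:ℝ) - d) * soliton D d / ((d:ℝ) + 1)
      = 0 := by
    apply Finset.sum_eq_zero
    intro d hd
    simp only [Finset.mem_Icc] at hd
    have hdD : D < d := by omega
    have : soliton D d = 0 := by
      unfold soliton
      rw [if_neg (by omega), if_neg (by omega)]
    rw [this]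
    ring
  -- the middle sum reduces to Icc 1 D
  have hsum2 : ∑ d ∈ Icc 1 D, (d:ℝ) * soliton D d / ((k:ℝ) - d + 1)
      = ∑ d ∈ Icc 1 (kappaCeil k s - 1), (d:ℝ) * soliton D d / ((k:ℝ) - d + 1) := by
    apply Finset.sum_subset
    · exact Finset.Icc_subset_Icc le_rfl (by omega)
    · intro d hd hnd
      simp only [Finset.mem_Icc] at hd hnd
      have hdD : D < d := by omega
      have : soliton D d = 0 := by
        unfold soliton
        rw [if_neg (by omega), if_neg (by omega)]
      rw [this]
      ring
  have hSigma : SigmaS k (soliton D) s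
      = (2 * s / 5) * ∑ d ∈ Icc 1 D, (d:ℝ) * soliton D d / ((k:ℝ) - d + 1) := by
    rw [SigmaS, hsum1, hsum3, hsum2]
    ring
  -- dbar as a soliton sum
  have hdbar_eq : dbar = ∑ d ∈ Icc 1 D, (d:ℝ) * soliton D d := by
    obtain ⟨E, rfl⟩ : ∃ E, D = E + 1 := ⟨D - 1, by omega⟩
    rw [hdbar, dbar_eq E (by omega)]
  -- key strict bound
  have hS : dbar / k < ∑ d ∈ Icc 1 D, (d:ℝ) * soliton D d / ((k:ℝ) - d + 1) := by
    rw [hdbar_eq, Finset.sum_div]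
    apply Finset.sum_lt_sum
    · intro d hd
      simp only [Finset.mem_Icc] at hd
      have hd1 : (1:ℝ) ≤ d := by exact_mod_cast hd.1
      have hdk : (d:ℝ) ≤ k := by exact_mod_cast hd.2.trans hDk
      have hx : 0 ≤ (d:ℝ) * soliton D d :=
        mul_nonneg (Nat.cast_nonneg d) (soliton_nonneg D d)
      apply div_le_div_of_nonneg_left hx (by linarith) (by linarith)
    · refine ⟨2, by simp only [Finset.mem_Icc]; omega, ?_⟩
      have hsol2 : soliton D 2 = 1/2 := by
        unfold soliton
        rw [if_neg (by omega), if_pos ⟨le_refl 2, hD2⟩]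
        norm_num
      rw [hsol2]
      norm_num
      exact inv_strictAnti₀ (by linarith) (by linarith)
  -- positivity of dbar and n
  have hdpos : 0 < dbar := by
    rw [hdbar]
    apply Finset.sum_pos
    · intro i hi
      simp only [Finset.mem_Icc] at hi
      have : (0:ℝ) < i := by exact_mod_cast hi.1
      positivity
    · exact ⟨1, by simp only [Finset.mem_Icc]; omega⟩
  have hnpos : (0:ℝ) < n := by
    rcases Nat.eq_zero_or_pos n with h | h
    · exfalso
      rw [h] at hn
      push_cast at hn
      nlinarith
    · exact_mod_cast h
  -- key exponent bound
  have hkey : 2 * (s:ℝ) * Real.log k < (n:ℝ) * SigmaS k (soliton D) s := by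
    rw [hSigma]
    have hc : (0:ℝ) < (n:ℝ) * (2 * s / 5) := by
      apply mul_pos hnpos
      apply div_pos (by linarith) (by norm_num)
    have step2 : (n:ℝ) * (2 * s / 5) * (dbar / k)
        < (n:ℝ) * (2 * s / 5) * (∑ d ∈ Icc 1 D, (d:ℝ) * soliton D d / ((k:ℝ) - d + 1)) :=
      (mul_lt_mul_iff_right₀ hc).mpr hS
    have heq : (n:ℝ) * (2 * s / 5) * (dbar / k) = (2 * s / (5 * k)) * ((n:ℝ) * dbar) := by
      field_simp
    have step1 : (2 * (s:ℝ) / (5 * k)) * (5 * k * Real.log k)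
        ≤ (2 * s / (5 * k)) * ((n:ℝ) * dbar) := by
      apply mul_le_mul_of_nonneg_left hn (by positivity)
    have heq2 : (2 * (s:ℝ) / (5 * k)) * (5 * k * Real.log k) = 2 * s * Real.log k := by
      field_simp
    calc 2 * (s:ℝ) * Real.log k
        = (2 * s / (5 * k)) * (5 * k * Real.log k) := heq2.symm
      _ ≤ (2 * s / (5 * k)) * ((n:ℝ) * dbar) := step1
      _ = (n:ℝ) * (2 * s / 5) * (dbar / k) := heq.symm
      _ < (n:ℝ) * (2 * s / 5) * (∑ d ∈ Icc 1 D, (d:ℝ) * soliton D d / ((k:ℝ) - d + 1)) := step2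
      _ = (n:ℝ) * (2 * s / 5 * ∑ d ∈ Icc 1 D, (d:ℝ) * soliton D d / ((k:ℝ) - d + 1)) := by ring
    -- associativity fix below if needed
  have hexp : Real.exp (-(n:ℝ) * SigmaS k (soliton D) s) < ((k:ℝ) ^ (2*s))⁻¹ := by
    have h1 : Real.exp (-(n:ℝ) * SigmaS k (soliton D) s)
        < Real.exp (-(2 * (s:ℝ) * Real.log k)) := by
      apply Real.exp_lt_exp.mpr
      rw [neg_mul]
      linarith
    have h2 : Real.exp (-(2 * (s:ℝ) * Real.log k)) = ((k:ℝ) ^ (2*s))⁻¹ := by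
      rw [Real.exp_neg, show (2 * (s:ℝ)) = ((2*s : ℕ) : ℝ) by push_cast; ring,
        Real.exp_nat_mul, Real.exp_log hk0]
    rw [← h2]
    exact h1
  have hchoose : (k.choose s : ℝ) ≤ (k:ℝ) ^ s := by
    exact_mod_cast Nat.choose_le_pow k s
  calc (k.choose s : ℝ) * Real.exp (-(n:ℝ) * SigmaS k (soliton D) s)
      ≤ (k:ℝ) ^ s * Real.exp (-(n:ℝ) * SigmaS k (soliton D) s) :=
        mul_le_mul_of_nonneg_right hchoose (Real.exp_pos _).le
    _ < (k:ℝ) ^ s * ((k:ℝ) ^ (2*s))⁻¹ :=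
        (mul_lt_mul_iff_right₀ (pow_pos hk0 s)).mpr hexp
    _ = ((k:ℝ) ^ s)⁻¹ := by
        rw [two_mul, pow_add]
        field_simp
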